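/- Let n ≥ 1 be a natural number, let p be a real number with 0 < p ≤ 1, and let a₁,…,aₙ be real numbers with each aᵢ ∈ {0, 1, 2}. Then p/2^(n+1) + ∑_{i=1}^{n} aᵢ/2^(i+1) = 1/2 if and only if p = 1 and aᵢ = 1 for all i = 1,…,n. -/

import Mathlib

lemma geom_half (n : ℕ) :
    ∑ i ∈ Finset.Icc 1 n, ((1:ℝ)/2) ^ (i + 1) = 1/2 - (1/2) ^ (n + 1) := by
  induction n with
  | zero => simp
  | succ k ih =>
    rw [Finset.sum_Icc_succ_top (by omega), ih]
    ring

lemma sum_bound (n : ℕ) (a : ℕ → ℝ) (h : ∀ i ∈ Finset.Icc 1 n, a i ≤ 2) :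
    ∑ i ∈ Finset.Icc 1 n, a i / 2 ^ (i + 1) ≤ 1 - (1/2) ^ n := by
  have h1 : ∑ i ∈ Finset.Icc 1 n, a i / 2 ^ (i + 1)
      ≤ ∑ i ∈ Finset.Icc 1 n, 2 * ((1:ℝ)/2) ^ (i + 1) := by
    apply Finset.sum_le_sum
    intro i hi
    have h2 : (2:ℝ) * ((1:ℝ)/2) ^ (i + 1) = 2 / 2 ^ (i + 1) := by
      rw [div_pow, one_pow]; ring
    rw [h2]
    gcongr
    exact h i hi
  calc _ ≤ _ := h1
    _ = 2 * (1/2 - ((1:ℝ)/2) ^ (n + 1)) := by rw [← Finset.mul_sum, geom_half]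
    _ = 1 - (1/2)^n := by ring

lemma sum_nonneg' (n : ℕ) (a : ℕ → ℝ) (h : ∀ i ∈ Finset.Icc 1 n, 0 ≤ a i) :
    0 ≤ ∑ i ∈ Finset.Icc 1 n, a i / 2 ^ (i + 1) := by
  apply Finset.sum_nonneg
  intro i hi
  have := h i hi
  positivity

/-- Arithmetic core of the NP-hardness proof: player 1's expected payoff
`p/2^(n+1) + ∑_{i=1}^n aᵢ/2^(i+1)` equals `1/2` iff `p = 1` and each `aᵢ = 1`. -/
theorem stmt_0 (n : ℕ) (hn : 1 ≤ n) (p : ℝ) (hp0 : 0 < p) (hp1 : p ≤ 1)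
    (a : ℕ → ℝ) (ha : ∀ i ∈ Finset.Icc 1 n, a i = 0 ∨ a i = 1 ∨ a i = 2) :
    p / 2 ^ (n + 1) + ∑ i ∈ Finset.Icc 1 n, a i / 2 ^ (i + 1) = 1 / 2 ↔
      p = 1 ∧ ∀ i ∈ Finset.Icc 1 n, a i = 1 := by
  induction n, hn using Nat.le_induction generalizing p a with
  | base =>
    simp only [Finset.Icc_self, Finset.sum_singleton, Finset.mem_singleton, forall_eq]
    norm_num
    constructor
    · intro h
      rcases ha 1 (by simp) with h1 | h1 | h1 <;> rw [h1] at h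
      · exfalso; linarith
      · exact ⟨by linarith, h1⟩
      · exfalso; linarith
    · rintro ⟨hp, h1⟩
      rw [hp, h1]
      norm_num
  | succ n hn ih =>
    -- split off i = 1 and reindex the rest
    have hins : Finset.Icc 1 (n + 1) = insert 1 (Finset.Icc 2 (n + 1)) := by
      ext i; simp; omega
    have hnot : (1 : ℕ) ∉ Finset.Icc 2 (n + 1) := by simp
    have hmap : Finset.Icc 2 (n + 1) =
        (Finset.Icc 1 n).map ⟨fun i => i + 1, add_left_injective 1⟩ := by
      ext i
      simp only [Finset.mem_map, Function.Embedding.coeFn_mk, Finset.mem_Icc]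
      constructor
      · intro h; exact ⟨i - 1, by omega, by omega⟩
      · rintro ⟨j, hj, rfl⟩; omega
    set T := ∑ i ∈ Finset.Icc 1 n, a (i + 1) / 2 ^ (i + 1) with hT
    have hsum : ∑ i ∈ Finset.Icc 1 (n + 1), a i / 2 ^ (i + 1)
        = a 1 / 4 + T / 2 := by
      rw [hins, Finset.sum_insert hnot, hmap, Finset.sum_map]
      simp only [Function.Embedding.coeFn_mk]
      rw [Finset.sum_div]
      congr 1
      · norm_num
      · apply Finset.sum_congr rfl
        intro i hi
        rw [pow_succ]
        ring
    have hTnn : 0 ≤ T := by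
      apply sum_nonneg'
      intro i hi
      rcases ha (i + 1) (by simp at hi ⊢; omega) with h | h | h <;> rw [h] <;> norm_num
    have hTb : T ≤ 1 - (1/2) ^ n := by
      apply sum_bound
      intro i hi
      rcases ha (i + 1) (by simp at hi ⊢; omega) with h | h | h <;> rw [h] <;> norm_num
    have hpow : (0:ℝ) < (1/2 : ℝ) ^ n := by positivity
    have hpow2 : (0:ℝ) < (2:ℝ) ^ (n + 1 + 1) := by positivity
    have hpeq : p / 2 ^ (n + 1 + 1) = p * ((1/2:ℝ)^n) / 4 := by
      rw [div_pow, one_pow, mul_one_div, div_div,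
        show (2:ℝ)^n * 4 = 2^(n+1+1) from by rw [pow_succ, pow_succ]; ring]
    have hIH := ih p hp0 hp1 (fun i => a (i + 1))
      (fun i hi => ha (i + 1) (by simp at hi ⊢; omega))
    have hpeq' : p / 2 ^ (n + 1) = p * ((1/2:ℝ)^n) / 2 := by
      rw [div_pow, one_pow, mul_one_div, div_div,
        show (2:ℝ)^n * 2 = 2^(n+1) from by rw [pow_succ]]
    rw [hpeq', ← hT] at hIH
    rw [hsum, hpeq]
    have hp' : 0 < p * (1/2:ℝ)^n := by positivity
    have hp'' : p * (1/2:ℝ)^n ≤ (1/2:ℝ)^n := by nlinarith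
    constructor
    · intro h
      rcases ha 1 (by simp) with h1 | h1 | h1
      · exfalso; rw [h1] at h; nlinarith
      · rw [h1] at h
        have : p * (1/2:ℝ)^n / 2 + T = 1/2 := by linarith
        obtain ⟨hpe, hae⟩ := hIH.mp this
        refine ⟨hpe, ?_⟩
        intro i hi
        rcases Nat.eq_or_lt_of_le (Finset.mem_Icc.mp hi).1 with h' | h'
        · rw [← h']; exact h1
        · have := hae (i - 1) (by simp at hi ⊢; omega)
          simpa [Nat.sub_add_cancel (by omega : 1 ≤ i)] using this
      · exfalso; rw [h1] at h; nlinarith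
    · rintro ⟨hpe, hae⟩
      have h1 : a 1 = 1 := hae 1 (by simp)
      have : p * (1/2:ℝ)^n / 2 + T = 1/2 := by
        apply hIH.mpr
        exact ⟨hpe, fun i hi => hae (i + 1) (by simp at hi ⊢; omega)⟩
      rw [h1]; linarith
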